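/- (Cross-term bound) Let Δ_L ∈ ℝ^{n₁×r}, Δ_R ∈ ℝ^{n₂×r}, and let G be an r×r positive definite diagonal matrix. Then ‖Δ_L·Δ_Rᴴ‖_F ≤ (1/2)·max(‖Δ_L G^{−1/2}‖, ‖Δ_R G^{−1/2}‖)·(‖Δ_L G^{1/2}‖_F + ‖Δ_R G^{1/2}‖_F), where ‖·‖ denotes the spectral norm. -/

import Mathlib

open Matrix BigOperators

/-- Frobenius norm of a real matrix. -/
noncomputable def frob {m n : Type*} [Fintype m] [Fintype n] (A : Matrix m n ℝ) : ℝ :=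
  Real.sqrt (∑ i, ∑ j, (A i j) ^ 2)

/-- Spectral norm (largest singular value) of a real matrix. -/
noncomputable def specNorm {m n : Type*} [Fintype m] [Fintype n] [DecidableEq n]
    (A : Matrix m n ℝ) : ℝ :=
  Real.sqrt (⨆ i, (Matrix.isHermitian_conjTranspose_mul_self A).eigenvalues i)

/-- Smallest singular value (√(λ_min(AᴴA)) convention). -/
noncomputable def sigmaMin {m n : Type*} [Fintype m] [Fintype n] [DecidableEq n]
    (A : Matrix m n ℝ) : ℝ :=
  Real.sqrt (⨅ i, (Matrix.isHermitian_conjTranspose_mul_self A).eigenvalues i)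

/-- Maximum Euclidean row norm ‖·‖₂,∞. -/
noncomputable def rowTwoInf {m n : Type*} [Fintype m] [Fintype n] (A : Matrix m n ℝ) : ℝ :=
  ⨆ i, Real.sqrt (∑ j, (A i j) ^ 2)

/-- Entrywise sup norm ‖·‖∞. -/
noncomputable def entryInf {m n : Type*} [Fintype m] [Fintype n] (A : Matrix m n ℝ) : ℝ :=
  ⨆ i, ⨆ j, |A i j|

lemma frob_nonneg {m n : Type*} [Fintype m] [Fintype n] (A : Matrix m n ℝ) : 0 ≤ frob A :=
  Real.sqrt_nonneg _

lemma specNorm_nonneg {m n : Type*} [Fintype m] [Fintype n] [DecidableEq n]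
    (A : Matrix m n ℝ) : 0 ≤ specNorm A := Real.sqrt_nonneg _

lemma frob_transpose {m n : Type*} [Fintype m] [Fintype n] (A : Matrix m n ℝ) :
    frob Aᵀ = frob A := by
  unfold frob
  rw [Finset.sum_comm]
  rfl

lemma rayleigh {m n : Type*} [Fintype m] [Fintype n] [DecidableEq n] [Nonempty n]
    (A : Matrix m n ℝ) (x : n → ℝ) :
    x ⬝ᵥ ((Aᵀ * A) *ᵥ x) ≤
      (⨆ i, (Matrix.isHermitian_conjTranspose_mul_self A).eigenvalues i) * (x ⬝ᵥ x) := by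
  classical
  set hS := Matrix.isHermitian_conjTranspose_mul_self A with hhS
  set U : Matrix n n ℝ := (Matrix.IsHermitian.eigenvectorUnitary hS : Matrix n n ℝ) with hU
  set ev := hS.eigenvalues with hev
  set y := Uᵀ *ᵥ x with hy
  have hUU : U * Uᵀ = 1 :=
    (Matrix.mem_unitaryGroup_iff).mp (Matrix.IsHermitian.eigenvectorUnitary hS).2
  have hxx : x ⬝ᵥ x = y ⬝ᵥ y := by
    rw [hy, Matrix.mulVec_transpose, ← Matrix.dotProduct_mulVec,
      Matrix.mulVec_vecMul, hUU, Matrix.one_mulVec]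
  have hspec : (Aᵀ * A : Matrix n n ℝ) = U * Matrix.diagonal ev * Uᵀ := by
    have := hS.spectral_theorem
    simp [Matrix.star_eq_conjTranspose, Matrix.conjTranspose_eq_transpose_of_trivial] at this
    exact this
  have hform : x ⬝ᵥ ((Aᵀ * A) *ᵥ x) = ∑ i, ev i * (y i)^2 := by
    rw [hspec, ← Matrix.mulVec_mulVec, ← Matrix.mulVec_mulVec,
      Matrix.dotProduct_mulVec x U, ← Matrix.mulVec_transpose, ← hy]
    simp [dotProduct, Matrix.mulVec_diagonal, sq]
    apply Finset.sum_congr rfl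
    intro i _
    ring
  set c := ⨆ i, ev i with hc
  have hle : ∀ i, ev i ≤ c := fun i =>
    le_ciSup (Set.Finite.bddAbove (Set.finite_range ev)) i
  calc x ⬝ᵥ ((Aᵀ * A) *ᵥ x) = ∑ i, ev i * (y i)^2 := hform
    _ ≤ ∑ i, c * (y i)^2 := by
        apply Finset.sum_le_sum
        intro i _
        exact mul_le_mul_of_nonneg_right (hle i) (sq_nonneg _)
    _ = c * (x ⬝ᵥ x) := by
        rw [hxx, ← Finset.mul_sum]
        simp [dotProduct, sq]

lemma frob_mul_t_le {n₁ n₂ r : Type*} [Fintype n₁] [Fintype n₂] [Fintype r] [DecidableEq r]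
    [Nonempty r] (M : Matrix n₁ r ℝ) (B : Matrix n₂ r ℝ) :
    frob (M * Bᵀ) ≤ frob M * specNorm B := by
  classical
  set c := ⨆ i, (Matrix.isHermitian_conjTranspose_mul_self B).eigenvalues i with hc
  have hc0 : 0 ≤ c := by
    obtain ⟨i⟩ := ‹Nonempty r›
    exact le_trans (Matrix.eigenvalues_conjTranspose_mul_self_nonneg B i)
      (le_ciSup (Set.Finite.bddAbove (Set.finite_range _)) i)
  have key : ∑ i, ∑ j, ((M * Bᵀ) i j)^2 ≤ c * ∑ i, ∑ j, (M i j)^2 := by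
    rw [Finset.mul_sum]
    apply Finset.sum_le_sum
    intro i _
    have h1 : ∑ j, ((M * Bᵀ) i j)^2 = (B *ᵥ (M i)) ⬝ᵥ (B *ᵥ (M i)) := by
      simp [dotProduct, Matrix.mul_apply, Matrix.mulVec, dotProduct, sq]
      apply Finset.sum_congr rfl
      intro j _
      congr 1 <;> exact Finset.sum_congr rfl (fun k _ => mul_comm _ _)
    have h2 : (B *ᵥ (M i)) ⬝ᵥ (B *ᵥ (M i)) = (M i) ⬝ᵥ ((Bᵀ * B) *ᵥ (M i)) := by
      rw [← Matrix.mulVec_mulVec, Matrix.dotProduct_mulVec (M i), Matrix.vecMul_transpose]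
    have h3 := rayleigh B (M i)
    have h4 : (M i) ⬝ᵥ (M i) = ∑ j, (M i j)^2 := by
      simp [dotProduct, sq]
    rw [h1, h2]
    calc _ ≤ c * ((M i) ⬝ᵥ (M i)) := h3
      _ = c * ∑ j, (M i j)^2 := by rw [h4]
  unfold frob specNorm
  rw [← Real.sqrt_mul (Finset.sum_nonneg (fun i _ => Finset.sum_nonneg (fun j _ => sq_nonneg (M i j))))]
  apply Real.sqrt_le_sqrt
  rw [mul_comm] at key
  rwa [← hc]

theorem stmt_10 {n₁ n₂ r : Type*} [Fintype n₁] [Fintype n₂] [Fintype r] [DecidableEq r]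
    (ΔL : Matrix n₁ r ℝ) (ΔR : Matrix n₂ r ℝ) (g : r → ℝ) (hg : ∀ i, 0 < g i) :
    frob (ΔL * ΔRᵀ) ≤
      (1 / 2) * max (specNorm (ΔL * Matrix.diagonal (fun i => (g i)⁻¹)))
                    (specNorm (ΔR * Matrix.diagonal (fun i => (g i)⁻¹))) *
      (frob (ΔL * Matrix.diagonal g) + frob (ΔR * Matrix.diagonal g)) := by
  classical
  cases isEmpty_or_nonempty r with
  | inl h =>
    have hz : frob (ΔL * ΔRᵀ) = 0 := by
      simp [frob, Matrix.mul_apply]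
    rw [hz]
    have hmax : 0 ≤ max (specNorm (ΔL * Matrix.diagonal (fun i => (g i)⁻¹)))
        (specNorm (ΔR * Matrix.diagonal (fun i => (g i)⁻¹))) :=
      le_max_of_le_left (specNorm_nonneg _)
    exact mul_nonneg (mul_nonneg (by norm_num) hmax)
      (add_nonneg (frob_nonneg _) (frob_nonneg _))
  | inr h =>
    set Dg : Matrix r r ℝ := Matrix.diagonal g with hDg
    set Di : Matrix r r ℝ := Matrix.diagonal (fun i => (g i)⁻¹) with hDi
    have hDD : Dg * Di = 1 := by
      have hf : (fun i => g i * (g i)⁻¹) = fun _ => (1:ℝ) :=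
        funext fun i => mul_inv_cancel₀ (hg i).ne'
      rw [hDg, hDi, Matrix.diagonal_mul_diagonal, hf, Matrix.diagonal_one]
    have hDD' : Di * Dg = 1 := by
      have hf : (fun i => (g i)⁻¹ * g i) = fun _ => (1:ℝ) :=
        funext fun i => inv_mul_cancel₀ (hg i).ne'
      rw [hDg, hDi, Matrix.diagonal_mul_diagonal, hf, Matrix.diagonal_one]
    have e1 : ΔL * ΔRᵀ = (ΔL * Dg) * (ΔR * Di)ᵀ := by
      rw [Matrix.transpose_mul, hDi, Matrix.diagonal_transpose, ← hDi, ← Matrix.mul_assoc,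
        Matrix.mul_assoc ΔL, hDD, Matrix.mul_one]
    have e2 : ΔL * ΔRᵀ = (ΔL * Di) * (ΔR * Dg)ᵀ := by
      rw [Matrix.transpose_mul, hDg, Matrix.diagonal_transpose, ← hDg, ← Matrix.mul_assoc,
        Matrix.mul_assoc ΔL, hDD', Matrix.mul_one]
    have b1 : frob (ΔL * ΔRᵀ) ≤ frob (ΔL * Dg) * specNorm (ΔR * Di) := by
      rw [e1]; exact frob_mul_t_le _ _
    have b2 : frob (ΔL * ΔRᵀ) ≤ frob (ΔR * Dg) * specNorm (ΔL * Di) := by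
      rw [e2, ← frob_transpose, Matrix.transpose_mul, Matrix.transpose_transpose]
      exact frob_mul_t_le _ _
    set sL := specNorm (ΔL * Di) with hsL
    set sR := specNorm (ΔR * Di) with hsR
    set m := max sL sR with hm
    have hsRm : sR ≤ m := le_max_right _ _
    have hsLm : sL ≤ m := le_max_left _ _
    have hfL : 0 ≤ frob (ΔL * Dg) := frob_nonneg _
    have hfR : 0 ≤ frob (ΔR * Dg) := frob_nonneg _
    have c1 : frob (ΔL * ΔRᵀ) ≤ frob (ΔL * Dg) * m :=
      b1.trans (mul_le_mul_of_nonneg_left hsRm hfL)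
    have c2 : frob (ΔL * ΔRᵀ) ≤ frob (ΔR * Dg) * m :=
      b2.trans (mul_le_mul_of_nonneg_left hsLm hfR)
    linarith
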